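/- If m ≥ 4 (so m − 2 ∉ −2ℕ), the Bessel–Fischer product is non-degenerate on the quotient F = ℂ[z_0,…,z_{m−1}]/⟨R²⟩: if ⟨p, q⟩_B = 0 for all q ∈ F then p = 0 in F. -/

import Mathlib

open MvPolynomial

noncomputable section

/-- Complex polynomials in the variables `z_0, …, z_{m−1}`. -/
abbrev Pm (m : ℕ) := MvPolynomial (Fin m) ℂ

/-- The diagonal entries of the bilinear form `β`: `β_{00} = −1`, `β_{kk} = 1` for `k ≥ 1`. -/
def sgn (m : ℕ) (i : Fin m) : ℂ := if (i : ℕ) = 0 then -1 else 1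

/-- The plain partial derivative `∂^i` as a linear operator. -/
def DOp (m : ℕ) (i : Fin m) : Module.End ℂ (Pm m) := (pderiv i).toLinearMap

/-- The lowered partial derivative `∂_i = ∑_k β_{ik} ∂^k`. -/
def dlow (m : ℕ) (i : Fin m) : Module.End ℂ (Pm m) := sgn m i • DOp m i

/-- Multiplication by the variable `z_i`. -/
def mulX (m : ℕ) (i : Fin m) : Module.End ℂ (Pm m) := LinearMap.mulLeft ℂ (X i)

/-- The Euler operator `E = ∑_{i,j} β^{ij} z_i ∂_j`. -/
def EOp (m : ℕ) : Module.End ℂ (Pm m) := ∑ i, sgn m i • (mulX m i * dlow m i)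

/-- The Laplacian `Δ = ∑_{i,j} β^{ij} ∂_i ∂_j`. -/
def LapOp (m : ℕ) : Module.End ℂ (Pm m) := ∑ i, sgn m i • (dlow m i * dlow m i)

/-- The Bessel operator `B(z_i) = (m − 2 + 2E)∂_i − z_i Δ` (parameter `λ = 2 − m`). -/
def BOp (m : ℕ) (i : Fin m) : Module.End ℂ (Pm m) :=
  (((m : ℂ) - 2) • (1 : Module.End ℂ (Pm m)) + (2 : ℂ) • EOp m) * dlow m i
    - mulX m i * LapOp m

/-- The modified Bessel operator: `B̃(z_0) = −B(z_0)`, `B̃(z_k) = B(z_k)` for `k ≥ 1`. -/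
def BtOp (m : ℕ) (i : Fin m) : Module.End ℂ (Pm m) := sgn m i • BOp m i

/-- The Bessel–Fischer product `⟨p,q⟩_B := (p(B̃) q̄)(0)`: substitute the modified
Bessel operators for the variables of `p`, apply to the coefficient-conjugate of `q`,
and evaluate at `0`. -/
def BF (m : ℕ) (p q : Pm m) : ℂ :=
  eval (0 : Fin m → ℂ)
    (((∑ α ∈ p.support, p.coeff α • (List.ofFn fun i : Fin m => (BtOp m i) ^ (α i)).prod) :
        Module.End ℂ (Pm m)) (map (starRingEnd ℂ) q))

/-- The angular momentum operator `L_{ij} = z_i ∂_j − z_j ∂_i`. -/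
def LOp (m : ℕ) (i j : Fin m) : Module.End ℂ (Pm m) :=
  mulX m i * dlow m j - mulX m j * dlow m i

/-- The squared radial coordinate `R² = ∑_{i,j} β^{ij} z_i z_j`. -/
def R2 (m : ℕ) : Pm m := ∑ i, sgn m i • (X i * X i)

namespace BFaux

lemma sgn_mul_self (m : ℕ) (i : Fin m) : sgn m i * sgn m i = 1 := by
  unfold sgn; split <;> norm_num

def eta (m : ℕ) (c : Fin m → ℂ) : Pm m := ∑ i, C (c i) * X i

variable {m : ℕ} {c : Fin m → ℂ}

lemma pderiv_eta (i : Fin m) : pderiv i (eta m c) = C (c i) := by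
  classical
  rw [eta, map_sum]
  rw [Finset.sum_eq_single i]
  · simp [pderiv_C_mul]
  · intro j _ hj
    simp [pderiv_C_mul, pderiv_X, Pi.single_apply, hj.symm]
  · simp

lemma pderiv_eta_pow (i : Fin m) (j : ℕ) :
    pderiv i ((eta m c) ^ j) = ((j : ℂ) * c i) • (eta m c) ^ (j - 1) := by
  rw [Derivation.leibniz_pow, pderiv_eta]
  rw [smul_eq_mul, nsmul_eq_mul, smul_eq_C_mul, map_mul, map_natCast]
  ring

lemma dlow_eta_pow (i : Fin m) (j : ℕ) :
    dlow m i ((eta m c) ^ j) = (sgn m i * ((j : ℂ) * c i)) • (eta m c) ^ (j - 1) := by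
  rw [dlow, LinearMap.smul_apply]
  show sgn m i • (pderiv i ((eta m c) ^ j)) = _
  rw [pderiv_eta_pow, smul_smul]

lemma dlow_one {m : ℕ} (i : Fin m) : dlow m i (1 : Pm m) = 0 := by
  rw [dlow, LinearMap.smul_apply]
  show sgn m i • (pderiv i (1 : Pm m)) = 0
  rw [Derivation.map_one_eq_zero]
  simp

lemma EOp_eta_pow (j : ℕ) : EOp m ((eta m c) ^ j) = (j : ℂ) • (eta m c) ^ j := by
  rw [EOp, LinearMap.sum_apply]
  cases j with
  | zero =>
    simp only [pow_zero, LinearMap.smul_apply, Module.End.mul_apply, dlow_one]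
    simp
  | succ j =>
    have hterm : ∀ i : Fin m,
        (sgn m i • (mulX m i * dlow m i)) ((eta m c) ^ (j+1))
          = ((j+1 : ℕ) : ℂ) • ((c i) • (X i * (eta m c) ^ j)) := by
      intro i
      rw [LinearMap.smul_apply, Module.End.mul_apply, dlow_eta_pow, map_smul, mulX,
        LinearMap.mulLeft_apply, Nat.add_sub_cancel, smul_smul, smul_smul]
      congr 1
      have := sgn_mul_self m i
      push_cast
      linear_combination ((c i) * (j:ℂ) + c i) * this
    rw [Finset.sum_congr rfl (fun i _ => hterm i), ← Finset.smul_sum]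
    congr 1
    rw [pow_succ', eta, Finset.sum_mul]
    apply Finset.sum_congr rfl
    intro i _
    rw [smul_eq_C_mul, mul_assoc]

lemma LapOp_eta_pow (hc : ∑ i, sgn m i * c i ^ 2 = 0) (j : ℕ) :
    LapOp m ((eta m c) ^ j) = 0 := by
  rw [LapOp, LinearMap.sum_apply]
  have hterm : ∀ i : Fin m,
      (sgn m i • (dlow m i * dlow m i)) ((eta m c) ^ j)
        = ((j:ℂ) * ((j-1 : ℕ) : ℂ) * (sgn m i * c i ^ 2)) • (eta m c) ^ (j - 1 - 1) := by
    intro i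
    rw [LinearMap.smul_apply, Module.End.mul_apply, dlow_eta_pow, map_smul, dlow_eta_pow,
      smul_smul, smul_smul]
    congr 1
    have := sgn_mul_self m i
    linear_combination ((j:ℂ) * ((j-1:ℕ):ℂ) * c i ^ 2 * sgn m i) * this
  rw [Finset.sum_congr rfl (fun i _ => hterm i)]
  rw [← Finset.sum_smul, ← Finset.mul_sum, hc]
  simp

lemma BtOp_eta_pow (hc : ∑ i, sgn m i * c i ^ 2 = 0) (i : Fin m) (j : ℕ) :
    BtOp m i ((eta m c) ^ j)
      = (((j:ℂ) * ((m:ℂ) + 2 * (j:ℂ) - 4)) * c i) • (eta m c) ^ (j - 1) := by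
  rw [BtOp, LinearMap.smul_apply, BOp, LinearMap.sub_apply, Module.End.mul_apply,
    Module.End.mul_apply, LapOp_eta_pow hc, map_zero, sub_zero, dlow_eta_pow, map_smul,
    LinearMap.add_apply, LinearMap.smul_apply, LinearMap.smul_apply, Module.End.one_apply,
    EOp_eta_pow]
  have hs := sgn_mul_self m i
  cases j with
  | zero => simp
  | succ j =>
    rw [Nat.add_sub_cancel]
    match_scalars
    linear_combination ((((m:ℂ) + 2 * (j:ℂ)) * ((j:ℂ)+1) - 2 * ((j:ℂ)+1)) * c i) * hs

def ee (m : ℕ) (j : ℕ) : ℂ := (j : ℂ) * ((m:ℂ) + 2 * (j:ℂ) - 4)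

def DD (m : ℕ) (j n : ℕ) : ℂ := ∏ t ∈ Finset.range n, ee m (j - t)

lemma DD_add (j a b : ℕ) : DD m j (a + b) = DD m j a * DD m (j - a) b := by
  unfold DD
  rw [Finset.prod_range_add]
  congr 1
  apply Finset.prod_congr rfl
  intro t _
  congr 1
  omega

lemma DD_one (j : ℕ) : DD m j 1 = ee m j := by
  simp [DD]

lemma BtOp_pow_eta (hc : ∑ i, sgn m i * c i ^ 2 = 0) (i : Fin m) (n : ℕ) :
    ∀ j : ℕ, (BtOp m i ^ n) ((eta m c) ^ j)
      = (DD m j n * c i ^ n) • (eta m c) ^ (j - n) := by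
  induction n with
  | zero => intro j; simp [DD]
  | succ n ih =>
    intro j
    rw [pow_succ, Module.End.mul_apply, BtOp_eta_pow hc, map_smul, ih, smul_smul]
    have h1 : j - 1 - n = j - (n + 1) := by omega
    have h2 : DD m j (n + 1) = ee m j * DD m (j - 1) n := by
      have := DD_add (m := m) j 1 n
      rw [DD_one] at this
      rw [show n + 1 = 1 + n by omega, this]
    rw [h1, h2, ee]
    ring_nf

lemma listprod_eta (hc : ∑ i, sgn m i * c i ^ 2 = 0) (l : List (Fin m × ℕ)) :
    ∀ j : ℕ, ((l.map fun q => BtOp m q.1 ^ q.2).prod) ((eta m c) ^ j)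
      = (DD m j (l.map Prod.snd).sum * (l.map fun q => c q.1 ^ q.2).prod)
          • (eta m c) ^ (j - (l.map Prod.snd).sum) := by
  induction l with
  | nil => intro j; simp [DD]
  | cons hd tl ih =>
    intro j
    rw [List.map_cons, List.prod_cons, Module.End.mul_apply, ih, map_smul,
      BtOp_pow_eta hc, smul_smul, List.map_cons, List.sum_cons, List.map_cons,
      List.prod_cons]
    have h1 : j - (tl.map Prod.snd).sum - hd.2 = j - (hd.2 + (tl.map Prod.snd).sum) := by omega
    have h2 : DD m j (hd.2 + (tl.map Prod.snd).sum)
        = DD m j (tl.map Prod.snd).sum * DD m (j - (tl.map Prod.snd).sum) hd.2 := by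
      rw [show hd.2 + (tl.map Prod.snd).sum = (tl.map Prod.snd).sum + hd.2 by omega,
        DD_add]
    rw [h1, h2]
    congr 1
    ring

lemma eval_zero_eta_pow (j : ℕ) :
    eval (0 : Fin m → ℂ) ((eta m c) ^ j) = if j = 0 then 1 else 0 := by
  rw [map_pow]
  have h0 : eval (0 : Fin m → ℂ) (eta m c) = 0 := by simp [eta]
  rw [h0]
  cases j <;> simp

lemma ee_zero : ee m 0 = 0 := by simp [ee]

lemma DD_eq_zero_of_lt {k n : ℕ} (h : k < n) : DD m k n = 0 := by
  apply Finset.prod_eq_zero (Finset.mem_range.mpr h)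
  rw [Nat.sub_self, ee_zero]

lemma BF_apply_pow {v : Fin m → ℂ} (hv : ∑ i, sgn m i * v i ^ 2 = 0) (p : Pm m) (k : ℕ) :
    BF m p ((∑ i, C ((starRingEnd ℂ) (v i)) * X i) ^ k)
      = DD m k k * ∑ α ∈ p.support.filter (fun α => (∑ i, α i) = k),
          p.coeff α * ∏ i, v i ^ α i := by
  have hmap : map (starRingEnd ℂ) ((∑ i, C ((starRingEnd ℂ) (v i)) * X i) ^ k)
      = (eta m v) ^ k := by
    rw [map_pow]
    congr 1
    rw [map_sum, eta]
    apply Finset.sum_congr rfl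
    intro i _
    rw [map_mul, map_C, map_X, Complex.conj_conj]
  rw [BF, hmap, LinearMap.sum_apply, map_sum]
  have step : ∀ α ∈ p.support,
      eval (0 : Fin m → ℂ)
          ((p.coeff α • (List.ofFn fun i : Fin m => (BtOp m i) ^ (α i)).prod)
            ((eta m v) ^ k))
        = p.coeff α * (if (∑ i, α i) = k then DD m k k * ∏ i, v i ^ α i else 0) := by
    intro α _
    rw [LinearMap.smul_apply, smul_eval]
    congr 1
    have hofn : (List.ofFn fun i : Fin m => (BtOp m i) ^ (α i))
        = (List.ofFn fun i : Fin m => ((i, α i) : Fin m × ℕ)).map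
            (fun q => BtOp m q.1 ^ q.2) := by
      rw [List.map_ofFn]
      rfl
    rw [hofn, listprod_eta hv]
    have hsnd : ((List.ofFn fun i : Fin m => ((i, α i) : Fin m × ℕ)).map Prod.snd).sum
        = ∑ i, α i := by
      rw [List.map_ofFn, List.sum_ofFn]
      rfl
    have hprd : ((List.ofFn fun i : Fin m => ((i, α i) : Fin m × ℕ)).map
          (fun q => v q.1 ^ q.2)).prod = ∏ i, v i ^ α i := by
      rw [List.map_ofFn, List.prod_ofFn]
      rfl
    rw [hsnd, hprd, smul_eval, eval_zero_eta_pow]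
    rcases lt_trichotomy (∑ i, α i) k with hlt | heq | hgt
    · rw [if_neg (by omega : ¬ (∑ i, α i) = k), if_neg (by omega : ¬ k - (∑ i, α i) = 0)]
      ring
    · rw [if_pos heq, heq, Nat.sub_self, if_pos rfl]
      ring
    · rw [if_neg (by omega : ¬ (∑ i, α i) = k), if_pos (by omega : k - (∑ i, α i) = 0),
        DD_eq_zero_of_lt hgt]
      ring
  rw [Finset.sum_congr rfl step, Finset.mul_sum, Finset.sum_filter]
  apply Finset.sum_congr rfl
  intro α _
  split <;> ring

lemma DD_self_ne_zero (hm : 4 ≤ m) (k : ℕ) : DD m k k ≠ 0 := by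
  rw [DD, Finset.prod_ne_zero_iff]
  intro t ht
  rw [Finset.mem_range] at ht
  rw [ee]
  apply mul_ne_zero
  · exact_mod_cast (by omega : (k - t : ℕ) ≠ 0)
  · have : ((m:ℂ) + 2 * ((k - t : ℕ) : ℂ) - 4) = ((m + 2 * (k - t) - 4 : ℕ) : ℂ) := by
      push_cast [Nat.cast_sub (by omega : 4 ≤ m + 2 * (k - t))]
      ring
    rw [this]
    exact_mod_cast (by omega : (m + 2 * (k - t) - 4 : ℕ) ≠ 0)

lemma eval_on_cone {m : ℕ} (hm : 4 ≤ m) (p : Pm m) (h : ∀ q : Pm m, BF m p q = 0)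
    (v : Fin m → ℂ) (hv : ∑ i, sgn m i * v i ^ 2 = 0) : eval v p = 0 := by
  have hker : ∀ k : ℕ, ∑ α ∈ p.support.filter (fun α => (∑ i, α i) = k),
      p.coeff α * ∏ i, v i ^ α i = 0 := by
    intro k
    have h0 := h ((∑ i, C ((starRingEnd ℂ) (v i)) * X i) ^ k)
    rw [BF_apply_pow hv] at h0
    exact (mul_eq_zero.mp h0).resolve_left (DD_self_ne_zero hm k)
  rw [eval_eq']
  rw [← Finset.sum_fiberwise_of_maps_to (g := fun α : Fin m →₀ ℕ => ∑ i, α i)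
    (t := Finset.range (p.totalDegree + 1)) ?hmaps]
  · apply Finset.sum_eq_zero
    intro k _
    exact hker k
  · intro α hα
    rw [Finset.mem_range]
    show (∑ i, α i) < p.totalDegree + 1
    have h1 : (∑ i, α i) ≤ p.totalDegree := by
      have h2 := MvPolynomial.le_totalDegree hα
      have h3 : α.sum (fun _ e => e) = ∑ i, α i := Finsupp.sum_fintype _ _ (fun _ => rfl)
      omega
    omega

lemma sgn_zero' (n : ℕ) : sgn (n+1) (0 : Fin (n+1)) = -1 := by simp [sgn]

lemma sgn_succ' (n : ℕ) (i : Fin n) : sgn (n+1) i.succ = 1 := by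
  simp [sgn, Fin.val_succ]

lemma finSuccEquiv_R2 (n : ℕ) :
    finSuccEquiv ℂ n (R2 (n+1)) =
      -(Polynomial.X ^ 2 - Polynomial.C (∑ k : Fin n, X k * X k)) := by
  rw [R2, Fin.sum_univ_succ, map_add, map_smul, map_mul, map_sum]
  rw [sgn_zero', finSuccEquiv_X_zero]
  have : ∀ i : Fin n, finSuccEquiv ℂ n (sgn (n+1) i.succ • (X i.succ * X i.succ))
      = Polynomial.C (X i * X i) := by
    intro i
    rw [sgn_succ', one_smul, map_mul, finSuccEquiv_X_succ, ← map_mul]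
  rw [Finset.sum_congr rfl (fun i _ => this i), ← map_sum]
  rw [neg_smul, one_smul, sq]
  ring

lemma mem_span_of_vanishing (n : ℕ) (hn : 1 ≤ n) (p : Pm (n+1))
    (hp : ∀ v : Fin (n+1) → ℂ, (∑ i, sgn (n+1) i * v i ^ 2 = 0) → eval v p = 0) :
    p ∈ Ideal.span {R2 (n+1)} := by
  set S : MvPolynomial (Fin n) ℂ := ∑ k : Fin n, X k * X k with hS
  set M : Polynomial (MvPolynomial (Fin n) ℂ) := Polynomial.X ^ 2 - Polynomial.C S with hM
  have hMmonic : M.Monic := Polynomial.monic_X_pow_sub_C S two_ne_zero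
  set P := finSuccEquiv ℂ n p with hP
  have hdiv : P %ₘ M + M * (P /ₘ M) = P := Polynomial.modByMonic_add_div P M
  have hdeg : (P %ₘ M).degree ≤ 1 := by
    have h2 : M.degree = 2 := Polynomial.degree_X_pow_sub_C (by norm_num) S
    have h3 := Polynomial.degree_modByMonic_lt P hMmonic
    rw [h2] at h3
    exact Order.le_of_lt_succ (by exact_mod_cast h3)
  have hr : P %ₘ M = Polynomial.C ((P %ₘ M).coeff 1) * Polynomial.X
      + Polynomial.C ((P %ₘ M).coeff 0) :=
    Polynomial.eq_X_add_C_of_degree_le_one hdeg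
  set a := (P %ₘ M).coeff 1 with ha
  set b := (P %ₘ M).coeff 0 with hb
  -- key evaluation identity
  have key : ∀ (x : Fin n → ℂ) (t : ℂ), t ^ 2 = eval x S →
      eval x a * t + eval x b = 0 := by
    intro x t ht
    have hv : ∑ i, sgn (n+1) i * (Fin.cons t x : Fin (n+1) → ℂ) i ^ 2 = 0 := by
      rw [Fin.sum_univ_succ, sgn_zero']
      have hrest : ∀ i : Fin n,
          sgn (n+1) i.succ * (Fin.cons t x : Fin (n+1) → ℂ) i.succ ^ 2 = x i ^ 2 := by
        intro i
        rw [sgn_succ', one_mul, Fin.cons_succ]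
      rw [Finset.sum_congr rfl (fun i _ => hrest i), Fin.cons_zero]
      have hevS : eval x S = ∑ k : Fin n, x k ^ 2 := by
        rw [hS, map_sum]
        apply Finset.sum_congr rfl
        intro k _
        rw [eval_mul, eval_X, sq]
      rw [ht, hevS]
      ring
    have h0 := hp _ hv
    rw [eval_eq_eval_mv_eval'] at h0
    rw [← hP, ← hdiv, Polynomial.map_add, Polynomial.map_mul, Polynomial.eval_add,
      Polynomial.eval_mul] at h0
    have hMeval : Polynomial.eval t (Polynomial.map (eval x) M) = 0 := by
      rw [hM, Polynomial.map_sub, Polynomial.map_pow, Polynomial.map_X, Polynomial.map_C,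
        Polynomial.eval_sub, Polynomial.eval_pow, Polynomial.eval_X, Polynomial.eval_C, ht]
      ring
    rw [hMeval, zero_mul, add_zero] at h0
    rw [hr] at h0
    simp only [Polynomial.map_add, Polynomial.map_mul, Polynomial.map_C, Polynomial.map_X,
      Polynomial.eval_add, Polynomial.eval_mul, Polynomial.eval_C, Polynomial.eval_X] at h0
    exact h0
  have hsq : ∀ x : Fin n → ℂ, ∃ t : ℂ, t ^ 2 = eval x S := fun x =>
    IsAlgClosed.exists_pow_nat_eq (eval x S) (by norm_num)
  have hbz : b = 0 := by
    apply MvPolynomial.funext (q := 0)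
    intro x
    obtain ⟨t, ht⟩ := hsq x
    have k1 := key x t ht
    have k2 := key x (-t) (by rw [neg_pow, ht]; ring)
    rw [map_zero]
    linear_combination (k1 + k2) / 2
  have haz : a = 0 := by
    have hSne : S ≠ 0 := by
      intro hc
      have := congrArg (eval (fun _ : Fin n => (1 : ℂ))) hc
      rw [hS, map_sum, map_zero] at this
      simp at this
      have hn0 : n = 0 := by exact_mod_cast this
      omega
    have haS : a * S = 0 := by
      apply MvPolynomial.funext (q := 0)
      intro x
      obtain ⟨t, ht⟩ := hsq x
      have k1 := key x t ht
      rw [hbz, map_zero, add_zero] at k1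
      rw [map_zero, eval_mul, ← ht]
      linear_combination t * k1
    rcases mul_eq_zero.mp haS with h | h
    · exact h
    · exact absurd h hSne
  have hrz : P %ₘ M = 0 := by
    rw [hr, haz, hbz]
    simp
  have hPM : P = M * (P /ₘ M) := by
    conv_lhs => rw [← hdiv]
    rw [hrz, zero_add]
  have hfac : p = R2 (n+1) * (-((finSuccEquiv ℂ n).symm (P /ₘ M))) := by
    apply (finSuccEquiv ℂ n).injective
    rw [map_mul, map_neg, AlgEquiv.apply_symm_apply, finSuccEquiv_R2, ← hS, ← hM, ← hP]
    have hneg : -M * -(P /ₘ M) = M * (P /ₘ M) := by ring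
    rw [hneg]
    exact hPM
  rw [hfac]
  exact Ideal.mem_span_singleton.mpr ⟨_, rfl⟩

end BFaux

/-- Non-degeneracy of the Bessel–Fischer product on the Fock space `ℂ[z]/⟨R²⟩`
for `m ≥ 4`: if `⟨p, q⟩_B = 0` for all `q`, then `p = 0` in the quotient. -/
theorem stmt14 (m : ℕ) (hm : 4 ≤ m) (p : Pm m)
    (h : ∀ q : Pm m, BF m p q = 0) : p ∈ Ideal.span {R2 m} := by
  obtain ⟨n, rfl⟩ : ∃ n, m = n + 1 := ⟨m - 1, by omega⟩
  exact BFaux.mem_span_of_vanishing n (by omega) p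
    (fun v hv => BFaux.eval_on_cone hm p h v hv)
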